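/- Let d ≥ 2 and let Δ be a nonzero traceless Hermitian matrix on C^d ⊗ C^d. Then there exist a PPT state ρ on C^d ⊗ C^d and a real number λ such that ρ + λΔ is an NPT state. -/

import Mathlib

open Matrix
open scoped ComplexOrder

noncomputable section

/-- A state (density matrix): positive semidefinite with trace 1. -/
def IsState {n : Type*} [Fintype n] (ρ : Matrix n n ℂ) : Prop :=
  ρ.PosSemidef ∧ ρ.trace = 1

/-- Partial transpose with respect to the second tensor factor. -/
def ptrans {d : ℕ} (ρ : Matrix (Fin d × Fin d) (Fin d × Fin d) ℂ) :
    Matrix (Fin d × Fin d) (Fin d × Fin d) ℂ :=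
  Matrix.of fun p q => ρ (p.1, q.2) (q.1, p.2)

namespace Stmt9Aux

open Complex Finset
open scoped ComplexConjugate

/-! ### Lagrange identity -/

lemma lagrange {ι : Type*} [Fintype ι] (a b : ι → ℂ) :
    (∑ l, normSq (a l)) * (∑ l, normSq (b l)) =
      normSq (∑ l, a l * b l) +
        (1/2) * ∑ l, ∑ m, normSq (a l * conj (b m) - a m * conj (b l)) := by
  have key : ∀ z : ℂ, ((normSq z : ℝ) : ℂ) = z * conj z := by
    intro z; rw [Complex.mul_conj]
  apply Complex.ofReal_injective
  push_cast
  simp only [key]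
  have h1 : (∑ l, a l * conj (a l)) * (∑ l, b l * conj (b l))
      = ∑ l, ∑ m, (a l * conj (a l)) * (b m * conj (b m)) := by
    rw [Finset.sum_mul_sum]
  have h2 : (∑ l, a l * b l) * conj (∑ l, a l * b l)
      = ∑ l, ∑ m, (a l * b l) * (conj (a m) * conj (b m)) := by
    rw [map_sum, Finset.sum_mul_sum]
    congr 1; ext l; congr 1; ext m
    rw [_root_.map_mul]
  rw [h1, h2]
  have h3 : ∀ l m : ι, ((a l * conj (b m) - a m * conj (b l)) *
      conj (a l * conj (b m) - a m * conj (b l)))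
      = (a l * conj (b m) - a m * conj (b l)) * (conj (a l) * b m - conj (a m) * b l) := by
    intro l m
    congr 1
    rw [map_sub, _root_.map_mul, _root_.map_mul, Complex.conj_conj, Complex.conj_conj]
  simp only [h3]
  set W : ι → ι → ℂ := fun l m =>
    (a l * conj (a l)) * (b m * conj (b m)) - (a l * b l) * (conj (a m) * conj (b m))
      - (1/2) * ((a l * conj (b m) - a m * conj (b l)) * (conj (a l) * b m - conj (a m) * b l))
    with hW
  have hanti : ∀ l m, W l m + W m l = 0 := by intro l m; simp only [hW]; ring
  have hsum : ∑ l, ∑ m, W l m = 0 := by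
    have h0 : ∑ l, ∑ m, (W l m + W m l) = 0 := by
      simp only [hanti, Finset.sum_const_zero]
    have hsplit : ∑ l, ∑ m, (W l m + W m l)
        = (∑ l, ∑ m, W l m) + (∑ l, ∑ m, W m l) := by
      simp [Finset.sum_add_distrib]
    have hcomm : (∑ l, ∑ m, W m l) = ∑ l, ∑ m, W l m := Finset.sum_comm
    rw [hsplit, hcomm, ← two_mul] at h0
    have h2' : (2:ℂ) ≠ 0 := two_ne_zero
    exact (mul_eq_zero.mp h0).resolve_left h2'
  have expand : ∑ l, ∑ m, W l m =
      (∑ l, ∑ m, (a l * conj (a l)) * (b m * conj (b m)))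
      - (∑ l, ∑ m, (a l * b l) * (conj (a m) * conj (b m)))
      - (1/2) * ∑ l, ∑ m, ((a l * conj (b m) - a m * conj (b l)) * (conj (a l) * b m - conj (a m) * b l)) := by
    simp only [hW, Finset.sum_sub_distrib, Finset.mul_sum]
  rw [expand] at hsum
  linear_combination hsum

/-! ### basic objects -/

def outer {ι : Type*} (v : ι → ℂ) : Matrix ι ι ℂ :=
  Matrix.of fun p q => v p * conj (v q)

variable {d : ℕ}

lemma ptrans_ptrans (A : Matrix (Fin d × Fin d) (Fin d × Fin d) ℂ) :
    ptrans (ptrans A) = A := by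
  ext ⟨i, k⟩ ⟨j, l⟩; rfl

lemma ptrans_zero : ptrans (0 : Matrix (Fin d × Fin d) (Fin d × Fin d) ℂ) = 0 := by
  ext ⟨i, k⟩ ⟨j, l⟩; rfl

lemma ptrans_add (A B : Matrix (Fin d × Fin d) (Fin d × Fin d) ℂ) :
    ptrans (A + B) = ptrans A + ptrans B := by
  ext ⟨i, k⟩ ⟨j, l⟩; rfl

lemma ptrans_smul (c : ℂ) (A : Matrix (Fin d × Fin d) (Fin d × Fin d) ℂ) :
    ptrans (c • A) = c • ptrans A := by
  ext ⟨i, k⟩ ⟨j, l⟩; rfl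

lemma ptrans_sub (A B : Matrix (Fin d × Fin d) (Fin d × Fin d) ℂ) :
    ptrans (A - B) = ptrans A - ptrans B := by
  ext ⟨i, k⟩ ⟨j, l⟩; rfl

lemma ptrans_one : ptrans (1 : Matrix (Fin d × Fin d) (Fin d × Fin d) ℂ) = 1 := by
  ext ⟨i, k⟩ ⟨j, l⟩
  by_cases hij : i = j <;> by_cases hkl : k = l <;>
    simp [ptrans, Matrix.one_apply, Prod.ext_iff, hij, hkl, eq_comm]

lemma ptrans_trace (A : Matrix (Fin d × Fin d) (Fin d × Fin d) ℂ) :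
    (ptrans A).trace = A.trace := by
  simp [Matrix.trace, Matrix.diag, ptrans]

lemma ptrans_isHermitian {A : Matrix (Fin d × Fin d) (Fin d × Fin d) ℂ}
    (hA : A.IsHermitian) : (ptrans A).IsHermitian := by
  ext ⟨i, k⟩ ⟨j, l⟩
  have := hA.apply (i, l) (j, k)
  simpa [ptrans, Matrix.conjTranspose_apply] using this

lemma outer_isHermitian {ι : Type*} (v : ι → ℂ) : (outer v).IsHermitian := by
  ext p q
  simp [outer, Matrix.conjTranspose_apply, mul_comm]

lemma trace_outer {ι : Type*} [Fintype ι] (v : ι → ℂ) :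
    (outer v).trace = ((∑ p, normSq (v p) : ℝ) : ℂ) := by
  simp [Matrix.trace, Matrix.diag, outer, Complex.mul_conj]

/-- Hermitian quadratic forms are real. -/
lemma herm_form_real {n : Type*} [Fintype n] {A : Matrix n n ℂ} (hA : A.IsHermitian)
    (x : n → ℂ) : (star x ⬝ᵥ A *ᵥ x) = (((star x ⬝ᵥ A *ᵥ x).re : ℝ) : ℂ) := by
  have h1 : conj (star x ⬝ᵥ A *ᵥ x) = star x ⬝ᵥ A *ᵥ x := by
    nth_rewrite 1 [Matrix.star_dotProduct]
    rw [starRingEnd_apply, star_star, Matrix.star_mulVec, hA.eq, ← Matrix.dotProduct_mulVec]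
  exact ((Complex.conj_eq_iff_re).mp h1).symm

lemma dot_self_re {n : Type*} [Fintype n] (z : n → ℂ) :
    star z ⬝ᵥ z = ((∑ i, normSq (z i) : ℝ) : ℂ) := by
  push_cast
  simp only [dotProduct, Pi.star_apply, Complex.star_def]
  exact Finset.sum_congr rfl fun i _ => by rw [mul_comm, Complex.mul_conj]

lemma sum_conj_mul_self {n : Type*} [Fintype n] (z : n → ℂ) :
    (∑ i, conj (z i) * z i) = ((∑ i, normSq (z i) : ℝ) : ℂ) := by
  push_cast
  exact Finset.sum_congr rfl fun i _ => by rw [mul_comm, Complex.mul_conj]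

/-! ### quadratic form computations -/

lemma form_outer {ι : Type*} [Fintype ι] (v x : ι → ℂ) :
    star x ⬝ᵥ (outer v) *ᵥ x = ((normSq (∑ q, conj (v q) * x q) : ℝ) : ℂ) := by
  have step : star x ⬝ᵥ (outer v) *ᵥ x
      = (∑ p, conj (x p) * v p) * (∑ q, conj (v q) * x q) := by
    simp only [dotProduct, Matrix.mulVec, outer, Matrix.of_apply, Pi.star_apply,
      Complex.star_def, Finset.sum_mul, Finset.mul_sum]
    rw [Finset.sum_comm]
    apply Finset.sum_congr rfl; intro p _
    apply Finset.sum_congr rfl; intro q _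
    ring
  rw [step]
  have : (∑ p, conj (x p) * v p) = conj (∑ q, conj (v q) * x q) := by
    rw [map_sum]
    apply Finset.sum_congr rfl; intro p _
    rw [_root_.map_mul, Complex.conj_conj]; ring
  rw [this, mul_comm, Complex.mul_conj]

lemma form_ptrans_outer (v x : Fin d × Fin d → ℂ) :
    star x ⬝ᵥ (ptrans (outer v)) *ᵥ x
      = ∑ i, ∑ j, (∑ l, v (i,l) * x (j,l)) * conj (∑ k, v (j,k) * x (i,k)) := by
  have expand : star x ⬝ᵥ (ptrans (outer v)) *ᵥ x
      = ∑ i, ∑ k, ∑ j, ∑ l, conj (x (i,k)) * v (i,l) * conj (v (j,k)) * x (j,l) := by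
    simp only [dotProduct, Matrix.mulVec, ptrans, outer, Matrix.of_apply, Pi.star_apply,
      Complex.star_def, Fintype.sum_prod_type, Finset.mul_sum]
    apply Finset.sum_congr rfl; intro i _
    apply Finset.sum_congr rfl; intro k _
    apply Finset.sum_congr rfl; intro j _
    apply Finset.sum_congr rfl; intro l _
    ring
  rw [expand]
  apply Finset.sum_congr rfl; intro i _
  rw [Finset.sum_comm]
  apply Finset.sum_congr rfl; intro j _
  have rhs : (∑ l, v (i,l) * x (j,l)) * conj (∑ k, v (j,k) * x (i,k))
      = ∑ l, ∑ k, (v (i,l) * x (j,l)) * (conj (v (j,k)) * conj (x (i,k))) := by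
    rw [map_sum, Finset.sum_mul_sum]
    apply Finset.sum_congr rfl; intro l _
    apply Finset.sum_congr rfl; intro k _
    rw [_root_.map_mul]
  rw [rhs, Finset.sum_comm]
  apply Finset.sum_congr rfl; intro k _
  apply Finset.sum_congr rfl; intro l _
  ring

/-! ### the key strict inequality -/

lemma key_lt (v x : Fin d × Fin d → ℂ)
    (hmin : ∃ i0 i1 k0 k1, v (i0,k0) * v (i1,k1) ≠ v (i0,k1) * v (i1,k0))
    (hx : x ≠ 0) :
    (star x ⬝ᵥ (ptrans (outer v)) *ᵥ x).re
      < (∑ p, normSq (v p)) * (∑ p, normSq (x p)) := by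
  obtain ⟨i0, i1, k0, k1, hm⟩ := hmin
  obtain ⟨p0, hp0⟩ : ∃ p0, x p0 ≠ 0 := by
    by_contra h; push_neg at h; exact hx (funext h)
  obtain ⟨j0, s0⟩ := p0
  set m : Fin d → Fin d → ℂ := fun i j => ∑ l, v (i,l) * x (j,l) with hmdef
  set A : Fin d → ℝ := fun i => ∑ l, normSq (v (i,l)) with hA
  set B : Fin d → ℝ := fun j => ∑ l, normSq (x (j,l)) with hB
  set D : Fin d → Fin d → ℝ := fun i j =>
    ∑ l, ∑ r, normSq (v (i,l) * conj (x (j,r)) - v (i,r) * conj (x (j,l))) with hD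
  have hDnn : ∀ i j, 0 ≤ D i j := by
    intro i j
    apply Finset.sum_nonneg; intro l _
    apply Finset.sum_nonneg; intro r _
    exact normSq_nonneg _
  have hwit : ∃ iw jw lw rw_,
      v (iw,lw) * conj (x (jw,rw_)) - v (iw,rw_) * conj (x (jw,lw)) ≠ 0 := by
    by_contra hall
    push_neg at hall
    have heq : ∀ i l r, v (i,l) * conj (x (j0,r)) = v (i,r) * conj (x (j0,l)) := by
      intro i l r
      have h := hall i j0 l r
      exact sub_eq_zero.mp h
    set c : ℂ := conj (x (j0,s0)) with hc
    have hcne : c ≠ 0 := by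
      simp only [hc, ne_eq, map_eq_zero]
      exact hp0
    have e1 := heq i0 k0 s0
    have e2 := heq i1 k1 s0
    have e3 := heq i0 k1 s0
    have e4 := heq i1 k0 s0
    have hcc : c * c ≠ 0 := mul_ne_zero hcne hcne
    apply hm
    have hmul : (v (i0,k0) * v (i1,k1)) * (c * c) = (v (i0,k1) * v (i1,k0)) * (c * c) := by
      calc (v (i0,k0) * v (i1,k1)) * (c * c)
          = (v (i0,k0) * c) * (v (i1,k1) * c) := by ring
        _ = (v (i0,s0) * conj (x (j0,k0))) * (v (i1,s0) * conj (x (j0,k1))) := by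
            rw [e1, e2]
        _ = (v (i0,s0) * conj (x (j0,k1))) * (v (i1,s0) * conj (x (j0,k0))) := by ring
        _ = (v (i0,k1) * c) * (v (i1,k0) * c) := by rw [e3, e4]
        _ = (v (i0,k1) * v (i1,k0)) * (c * c) := by ring
    exact mul_right_cancel₀ hcc hmul
  obtain ⟨iw, jw, lw, rw_, hne⟩ := hwit
  set ε : ℝ := normSq (v (iw,lw) * conj (x (jw,rw_)) - v (iw,rw_) * conj (x (jw,lw))) with hε
  have hεpos : 0 < ε := normSq_pos.mpr hne
  have hDw : ε ≤ D iw jw := by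
    have h1 : ε ≤ ∑ r, normSq (v (iw,lw) * conj (x (jw,r)) - v (iw,r) * conj (x (jw,lw))) :=
      Finset.single_le_sum (f := fun r => normSq (v (iw,lw) * conj (x (jw,r)) - v (iw,r) * conj (x (jw,lw))))
        (fun r _ => normSq_nonneg _) (Finset.mem_univ rw_)
    refine h1.trans ?_
    exact Finset.single_le_sum
      (f := fun l => ∑ r, normSq (v (iw,l) * conj (x (jw,r)) - v (iw,r) * conj (x (jw,l))))
      (fun l _ => Finset.sum_nonneg fun r _ => normSq_nonneg _) (Finset.mem_univ lw)
  have hDsum : ε ≤ ∑ i, ∑ j, D i j := by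
    refine hDw.trans ?_
    have h1 : D iw jw ≤ ∑ j, D iw j :=
      Finset.single_le_sum (f := fun j => D iw j) (fun j _ => hDnn _ _) (Finset.mem_univ jw)
    refine h1.trans ?_
    exact Finset.single_le_sum (f := fun i => ∑ j, D i j)
      (fun i _ => Finset.sum_nonneg fun j _ => hDnn _ _) (Finset.mem_univ iw)
  have lag : ∀ i j, normSq (m i j) = A i * B j - (1/2) * D i j := by
    intro i j
    have h := lagrange (fun l => v (i,l)) (fun l => x (j,l))
    simp only [hmdef, hA, hB, hD] at *
    linarith
  have step1 : ∀ i j, (m i j * conj (m j i)).re ≤ (normSq (m i j) + normSq (m j i)) / 2 := by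
    intro i j
    have h1 : (m i j * conj (m j i)).re ≤ ‖m i j * conj (m j i)‖ :=
      Complex.re_le_norm _
    have h2 : ‖m i j * conj (m j i)‖ = ‖m i j‖ * ‖m j i‖ := by
      rw [norm_mul, Complex.norm_conj]
    have h3 := Complex.sq_norm (m i j)
    have h4 := Complex.sq_norm (m j i)
    nlinarith [sq_nonneg (‖m i j‖ - ‖m j i‖)]
  calc (star x ⬝ᵥ (ptrans (outer v)) *ᵥ x).re
      = ∑ i, ∑ j, (m i j * conj (m j i)).re := by
        rw [form_ptrans_outer]
        rw [Complex.re_sum]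
        exact Finset.sum_congr rfl fun i _ => Complex.re_sum _ _
    _ ≤ ∑ i, ∑ j, (normSq (m i j) + normSq (m j i)) / 2 := by
        apply Finset.sum_le_sum; intro i _
        apply Finset.sum_le_sum; intro j _
        exact step1 i j
    _ = ∑ i, ∑ j, normSq (m i j) := by
        have swap : (∑ i, ∑ j, normSq (m j i)) = ∑ i, ∑ j, normSq (m i j) := Finset.sum_comm
        simp only [div_eq_inv_mul, ← Finset.mul_sum, Finset.sum_add_distrib]
        rw [swap]; ring
    _ = (∑ i, A i) * (∑ j, B j) - (1/2) * ∑ i, ∑ j, D i j := by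
        have e1 : ∑ i, ∑ j, normSq (m i j) = ∑ i, ∑ j, (A i * B j - (1/2) * D i j) := by
          exact Finset.sum_congr rfl fun i _ => Finset.sum_congr rfl fun j _ => lag i j
        rw [e1]
        rw [Finset.sum_mul_sum]
        simp only [Finset.sum_sub_distrib, Finset.mul_sum]
    _ ≤ (∑ i, A i) * (∑ j, B j) - (1/2) * ε := by
        have := hDsum
        nlinarith
    _ < (∑ i, A i) * (∑ j, B j) := by linarith
    _ = (∑ p, normSq (v p)) * (∑ p, normSq (x p)) := by
        rw [Fintype.sum_prod_type (f := fun p : Fin d × Fin d => normSq (v p)),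
          Fintype.sum_prod_type (f := fun p : Fin d × Fin d => normSq (x p))]

/-! ### uniform lower bound for positive definite matrices -/

lemma posdef_uniform {n : Type*} [Fintype n] [DecidableEq n] [Nonempty n]
    {M : Matrix n n ℂ} (hM : M.PosDef) :
    ∃ μ : ℝ, 0 < μ ∧ ∀ x : n → ℂ,
      μ * (∑ p, normSq (x p)) ≤ (star x ⬝ᵥ M *ᵥ x).re := by
  have herm := hM.1
  set U : Matrix n n ℂ := (Matrix.IsHermitian.eigenvectorUnitary herm : Matrix n n ℂ) with hU
  have hUU : U * star U = 1 :=
    (Matrix.mem_unitaryGroup_iff).mp (Matrix.IsHermitian.eigenvectorUnitary herm).2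
  refine ⟨Finset.univ.inf' Finset.univ_nonempty herm.eigenvalues, ?_, ?_⟩
  · rw [Finset.lt_inf'_iff]
    intro i _
    exact hM.eigenvalues_pos i
  · intro x
    set y : n → ℂ := star U *ᵥ x with hy
    have hsy : star y = star x ᵥ* U := by
      rw [hy, Matrix.star_mulVec, Matrix.star_eq_conjTranspose, Matrix.conjTranspose_conjTranspose]
    have e : star x ⬝ᵥ M *ᵥ x = star y ⬝ᵥ ((Matrix.diagonal (RCLike.ofReal ∘ herm.eigenvalues)) *ᵥ y) := by
      conv_lhs => rw [herm.spectral_theorem, Unitary.conjStarAlgAut_apply]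
      rw [← Matrix.mulVec_mulVec, ← Matrix.mulVec_mulVec, Matrix.dotProduct_mulVec (star x) U, ← hsy, hy]
    have ediag : star y ⬝ᵥ ((Matrix.diagonal (RCLike.ofReal ∘ herm.eigenvalues)) *ᵥ y)
        = ∑ i, ((herm.eigenvalues i : ℂ) * (conj (y i) * y i)) := by
      simp only [dotProduct, Matrix.mulVec_diagonal, Pi.star_apply, Complex.star_def,
        Function.comp_apply]
      have hcast : ∀ r : ℝ, (RCLike.ofReal r : ℂ) = Complex.ofReal r := fun r => rfl
      refine Finset.sum_congr rfl fun i _ => ?_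
      rw [hcast]
      ring
    have ereal : (star x ⬝ᵥ M *ᵥ x).re = ∑ i, herm.eigenvalues i * normSq (y i) := by
      rw [e, ediag, Complex.re_sum]
      apply Finset.sum_congr rfl; intro i _
      have : conj (y i) * y i = ((normSq (y i) : ℝ) : ℂ) := by
        rw [mul_comm, Complex.mul_conj]
      rw [this]
      rw [← Complex.ofReal_mul]
      simp
    have hyx : (∑ i, normSq (y i)) = ∑ i, normSq (x i) := by
      have h1 : star y ⬝ᵥ y = star x ⬝ᵥ x := by
        rw [hsy, hy, ← Matrix.dotProduct_mulVec, Matrix.mulVec_mulVec, hUU, Matrix.one_mulVec]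
      have h2 := dot_self_re y
      have h3 := dot_self_re x
      rw [h2, h3] at h1
      exact_mod_cast h1
    rw [ereal, ← hyx]
    rw [Finset.mul_sum]
    apply Finset.sum_le_sum
    intro i _
    apply mul_le_mul_of_nonneg_right _ (normSq_nonneg _)
    exact Finset.inf'_le _ (Finset.mem_univ i)

/-! ### crude entrywise bound -/

lemma entry_bound {n : Type*} [Fintype n] (A : Matrix n n ℂ) (x : n → ℂ) :
    |(star x ⬝ᵥ A *ᵥ x).re| ≤ (∑ p, ∑ q, ‖A p q‖) * (∑ p, normSq (x p)) := by
  set S := ∑ p, normSq (x p) with hS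
  have habs : ∀ p, ‖x p‖ ^ 2 ≤ S := by
    intro p
    rw [Complex.sq_norm]
    exact Finset.single_le_sum (f := fun p => normSq (x p))
      (fun q _ => normSq_nonneg _) (Finset.mem_univ p)
  have key : ∀ p q, ‖star (x p) * (A p q * x q)‖ ≤ ‖A p q‖ * S := by
    intro p q
    have e : ‖star (x p) * (A p q * x q)‖
        = ‖A p q‖ * (‖x p‖ * ‖x q‖) := by
      rw [norm_mul, norm_mul, Complex.star_def, Complex.norm_conj]
      ring
    rw [e]
    apply mul_le_mul_of_nonneg_left _ (norm_nonneg _)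
    nlinarith [habs p, habs q, sq_nonneg (‖x p‖ - ‖x q‖),
      norm_nonneg (x p), norm_nonneg (x q)]
  have expand : star x ⬝ᵥ A *ᵥ x = ∑ p, ∑ q, star (x p) * (A p q * x q) := by
    simp only [dotProduct, Matrix.mulVec, Pi.star_apply, Finset.mul_sum]
  calc |(star x ⬝ᵥ A *ᵥ x).re| ≤ ‖star x ⬝ᵥ A *ᵥ x‖ := Complex.abs_re_le_norm _
    _ = ‖∑ p, ∑ q, star (x p) * (A p q * x q)‖ := by rw [expand]
    _ ≤ ∑ p, ‖∑ q, star (x p) * (A p q * x q)‖ := norm_sum_le _ _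
    _ ≤ ∑ p, ∑ q, ‖star (x p) * (A p q * x q)‖ :=
        Finset.sum_le_sum fun p _ => norm_sum_le _ _
    _ ≤ ∑ p, ∑ q, ‖A p q‖ * S :=
        Finset.sum_le_sum fun p _ => Finset.sum_le_sum fun q _ => key p q
    _ = (∑ p, ∑ q, ‖A p q‖) * S := by simp [Finset.sum_mul]

/-! ### a PSD matrix with zero trace vanishes -/

lemma psd_trace_zero {n : Type*} [Fintype n] [DecidableEq n] {A : Matrix n n ℂ}
    (hA : A.PosSemidef) (ht : A.trace = 0) : A = 0 := by
  have herm := hA.1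
  have hUU : star ((Matrix.IsHermitian.eigenvectorUnitary herm : Matrix n n ℂ))
      * (Matrix.IsHermitian.eigenvectorUnitary herm : Matrix n n ℂ) = 1 :=
    (Matrix.mem_unitaryGroup_iff').mp (Matrix.IsHermitian.eigenvectorUnitary herm).2
  have htr : A.trace = ∑ i, ((herm.eigenvalues i : ℂ)) := by
    conv_lhs => rw [herm.spectral_theorem, Unitary.conjStarAlgAut_apply]
    rw [Matrix.trace_mul_cycle, hUU, Matrix.one_mul, Matrix.trace_diagonal]
    simp
  rw [htr] at ht
  have hre : (∑ i, herm.eigenvalues i) = 0 := by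
    have := congrArg Complex.re ht
    rw [Complex.re_sum] at this
    simpa using this
  have hzero : ∀ i, herm.eigenvalues i = 0 := by
    intro i
    have h := (Finset.sum_eq_zero_iff_of_nonneg
      (fun i _ => hA.eigenvalues_nonneg i)).mp hre
    exact h i (Finset.mem_univ i)
  have hAeq : A = (Matrix.IsHermitian.eigenvectorUnitary herm : Matrix n n ℂ)
      * Matrix.diagonal (RCLike.ofReal ∘ herm.eigenvalues)
      * star ((Matrix.IsHermitian.eigenvectorUnitary herm : Matrix n n ℂ)) := herm.spectral_theorem
  rw [hAeq]
  have hdiag : Matrix.diagonal (RCLike.ofReal ∘ herm.eigenvalues) = (0 : Matrix n n ℂ) := by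
    ext i j
    by_cases hij : i = j <;> simp [Matrix.diagonal, hij, hzero]
  rw [hdiag, Matrix.mul_zero, Matrix.zero_mul]

/-! ### perturbation to a non-product vector -/

lemma exists_minor_neg (hd : 2 ≤ d) (T : Matrix (Fin d × Fin d) (Fin d × Fin d) ℂ)
    (hy : ∃ y : Fin d × Fin d → ℂ, (star y ⬝ᵥ T *ᵥ y).re < 0) :
    ∃ v : Fin d × Fin d → ℂ,
      (∃ i0 i1 k0 k1, v (i0,k0) * v (i1,k1) ≠ v (i0,k1) * v (i1,k0)) ∧
        (star v ⬝ᵥ T *ᵥ v).re < 0 := by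
  obtain ⟨y, hy⟩ := hy
  by_cases hmin : ∃ i0 i1 k0 k1, y (i0,k0) * y (i1,k1) ≠ y (i0,k1) * y (i1,k0)
  · exact ⟨y, hmin, hy⟩
  push_neg at hmin
  have hyne : y ≠ 0 := by
    rintro rfl
    simp at hy
  obtain ⟨p0, hp0⟩ : ∃ p0, y p0 ≠ 0 := by
    by_contra h; push_neg at h; exact hyne (funext h)
  obtain ⟨i0, k0⟩ := p0
  have : Nontrivial (Fin d) := by
    exact Fin.nontrivial_iff_two_le.mpr hd
  obtain ⟨i1, hi1⟩ := exists_ne i0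
  obtain ⟨k1, hk1⟩ := exists_ne k0
  set e : Fin d × Fin d → ℂ := Pi.single (i1, k1) 1 with he
  set qy : ℝ := (star y ⬝ᵥ T *ᵥ y).re with hqy
  set b : ℝ := ((star y ⬝ᵥ T *ᵥ e) + (star e ⬝ᵥ T *ᵥ y)).re with hb
  set cc : ℝ := (star e ⬝ᵥ T *ᵥ e).re with hcc
  have expand : ∀ t : ℝ, (star (y + (t:ℂ) • e) ⬝ᵥ T *ᵥ (y + (t:ℂ) • e)).re
      = qy + t * b + t^2 * cc := by
    intro t
    have h1 : star (y + (t:ℂ) • e) ⬝ᵥ T *ᵥ (y + (t:ℂ) • e)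
        = (star y ⬝ᵥ T *ᵥ y) + (t:ℂ) * ((star y ⬝ᵥ T *ᵥ e) + (star e ⬝ᵥ T *ᵥ y))
          + (t:ℂ)^2 * (star e ⬝ᵥ T *ᵥ e) := by
      have hstar : star (y + (t:ℂ) • e) = star y + (t:ℂ) • star e := by
        rw [star_add, star_smul, Complex.star_def, Complex.conj_ofReal]
      rw [hstar]
      simp only [Matrix.mulVec_add, Matrix.mulVec_smul, dotProduct_add, add_dotProduct,
        smul_dotProduct, dotProduct_smul, smul_eq_mul]
      ring
    rw [h1, show ((t:ℂ)^2 * (star e ⬝ᵥ T *ᵥ e)) = (((t^2 : ℝ)):ℂ) * (star e ⬝ᵥ T *ᵥ e) from by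
      push_cast; ring]
    simp only [Complex.add_re, Complex.re_ofReal_mul, hqy, hb, hcc]
  set t0 : ℝ := min 1 ((-qy) / (2 * (|b| + |cc| + 1))) with ht0
  have hqyneg : qy < 0 := hy
  have hden : 0 < 2 * (|b| + |cc| + 1) := by positivity
  have ht0pos : 0 < t0 := by
    apply lt_min one_pos
    apply div_pos (by linarith) hden
  have ht0le1 : t0 ≤ 1 := min_le_left _ _
  have ht0le : t0 ≤ (-qy) / (2 * (|b| + |cc| + 1)) := min_le_right _ _
  refine ⟨y + (t0:ℂ) • e, ?_, ?_⟩
  · refine ⟨i0, i1, k0, k1, ?_⟩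
    have hne11 : (i0, k0) ≠ (i1, k1) := fun h => hi1 (congrArg Prod.fst h).symm
    have hne12 : (i0, k1) ≠ (i1, k1) := fun h => hi1 (congrArg Prod.fst h).symm
    have hne21 : (i1, k0) ≠ (i1, k1) := fun h => hk1 (congrArg Prod.snd h).symm
    have v1 : (y + (t0:ℂ) • e) (i0, k0) = y (i0, k0) := by
      simp [he, Pi.single_eq_of_ne hne11]
    have v2 : (y + (t0:ℂ) • e) (i1, k1) = y (i1, k1) + t0 := by
      simp [he]
    have v3 : (y + (t0:ℂ) • e) (i0, k1) = y (i0, k1) := by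
      simp [he, Pi.single_eq_of_ne hne12]
    have v4 : (y + (t0:ℂ) • e) (i1, k0) = y (i1, k0) := by
      simp [he, Pi.single_eq_of_ne hne21]
    rw [v1, v2, v3, v4]
    have hprod := hmin i0 i1 k0 k1
    intro hcontra
    have hz : y (i0, k0) * (t0 : ℂ) = 0 := by
      have : y (i0,k0) * y (i1,k1) + y (i0,k0) * t0 = y (i0,k1) * y (i1,k0) := by
        ring_nf at hcontra ⊢
        linear_combination hcontra
      rw [hprod] at this
      linear_combination this
    rcases mul_eq_zero.mp hz with h | h
    · exact hp0 h
    · exact (Complex.ofReal_ne_zero.mpr (ne_of_gt ht0pos)) h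
  · rw [expand t0]
    have hb' : t0 * b ≤ t0 * |b| := by
      apply mul_le_mul_of_nonneg_left (le_abs_self b) (le_of_lt ht0pos)
    have hc' : t0^2 * cc ≤ t0 * |cc| := by
      have h1 : t0^2 * cc ≤ t0^2 * |cc| :=
        mul_le_mul_of_nonneg_left (le_abs_self cc) (sq_nonneg t0)
      have h2 : t0^2 * |cc| ≤ t0 * |cc| := by
        have : t0^2 ≤ t0 := by nlinarith
        exact mul_le_mul_of_nonneg_right this (abs_nonneg cc)
      linarith
    have hbound : t0 * (|b| + |cc|) ≤ -qy / 2 := by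
      have h1 : t0 * (|b| + |cc| + 1) ≤ ((-qy) / (2 * (|b| + |cc| + 1))) * (|b| + |cc| + 1) := by
        apply mul_le_mul_of_nonneg_right ht0le (by positivity)
      have h2 : ((-qy) / (2 * (|b| + |cc| + 1))) * (|b| + |cc| + 1) = -qy / 2 := by
        field_simp
      nlinarith [abs_nonneg b, abs_nonneg cc, ht0pos]
    nlinarith

end Stmt9Aux

open Stmt9Aux Complex Finset
open scoped ComplexConjugate

set_option maxHeartbeats 1600000 in
/-- A state is PPT if its partial transpose is positive semidefinite, NPT otherwise. -/
theorem stmt9 (d : ℕ) (hd : 2 ≤ d)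
    (Δ : Matrix (Fin d × Fin d) (Fin d × Fin d) ℂ)
    (hΔ0 : Δ ≠ 0) (hΔH : Δ.IsHermitian) (hΔtr : Δ.trace = 0) :
    ∃ (ρ : Matrix (Fin d × Fin d) (Fin d × Fin d) ℂ) (lam : ℝ),
      IsState ρ ∧ (ptrans ρ).PosSemidef ∧
        IsState (ρ + (lam : ℂ) • Δ) ∧ ¬ (ptrans (ρ + (lam : ℂ) • Δ)).PosSemidef := by
  classical
  haveI : Nonempty (Fin d) := ⟨⟨0, by omega⟩⟩
  haveI : Nonempty (Fin d × Fin d) := inferInstance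
  set Δτ := ptrans Δ with hΔτdef
  have hΔτH : Δτ.IsHermitian := ptrans_isHermitian hΔH
  have hΔτtr : Δτ.trace = 0 := by rw [hΔτdef, ptrans_trace]; exact hΔtr
  have hΔτ0 : Δτ ≠ 0 := by
    intro h
    apply hΔ0
    have h2 := congrArg ptrans h
    rwa [hΔτdef, ptrans_ptrans, ptrans_zero] at h2
  -- a direction where the partial transpose of Δ is negative
  have hneg : ∃ y : Fin d × Fin d → ℂ, (star y ⬝ᵥ Δτ *ᵥ y).re < 0 := by
    by_contra h
    push_neg at h
    have hpsd : Δτ.PosSemidef := by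
      refine Matrix.PosSemidef.of_dotProduct_mulVec_nonneg hΔτH fun x => ?_
      rw [herm_form_real hΔτH x]
      exact Complex.zero_le_real.mpr (h x)
    exact hΔτ0 (psd_trace_zero hpsd hΔτtr)
  obtain ⟨v, hminor, hvneg⟩ := exists_minor_neg hd Δτ hneg
  set N : ℝ := ∑ p, normSq (v p) with hN
  have hv0 : v ≠ 0 := by
    rintro rfl
    simp at hvneg
  have hNpos : 0 < N := by
    obtain ⟨p, hp⟩ : ∃ p, v p ≠ 0 := by
      by_contra h; push_neg at h; exact hv0 (funext h)
    have h1 : 0 < normSq (v p) := normSq_pos.mpr hp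
    have h2 : normSq (v p) ≤ N :=
      Finset.single_le_sum (f := fun p => normSq (v p))
        (fun q _ => normSq_nonneg _) (Finset.mem_univ p)
    linarith
  set P := ptrans (outer v) with hP
  set M : Matrix (Fin d × Fin d) (Fin d × Fin d) ℂ := ((N:ℝ):ℂ) • 1 - P with hM
  have hPH : P.IsHermitian := ptrans_isHermitian (outer_isHermitian v)
  have hIdH : (((N:ℝ):ℂ) • (1 : Matrix (Fin d × Fin d) (Fin d × Fin d) ℂ)).IsHermitian := by
    rw [Matrix.IsHermitian, Matrix.conjTranspose_smul, Matrix.conjTranspose_one]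
    rw [show star ((N:ℝ):ℂ) = ((N:ℝ):ℂ) from by
      rw [Complex.star_def, Complex.conj_ofReal]]
  have hMH : M.IsHermitian := by
    rw [hM, Matrix.IsHermitian, Matrix.conjTranspose_sub, hIdH.eq, hPH.eq]
  -- quadratic form of M
  have hsmul_form : ∀ (r : ℝ) (A : Matrix (Fin d × Fin d) (Fin d × Fin d) ℂ)
      (x : Fin d × Fin d → ℂ),
      star x ⬝ᵥ ((r:ℂ) • A) *ᵥ x = (r:ℂ) * (star x ⬝ᵥ A *ᵥ x) := by
    intro r A x
    rw [Matrix.smul_mulVec, dotProduct_smul, smul_eq_mul]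
  have hMform : ∀ x : Fin d × Fin d → ℂ,
      star x ⬝ᵥ M *ᵥ x = ((N:ℝ):ℂ) * (star x ⬝ᵥ x) - (star x ⬝ᵥ P *ᵥ x) := by
    intro x
    rw [hM, Matrix.sub_mulVec, dotProduct_sub]
    congr 1
    rw [Matrix.smul_mulVec, Matrix.one_mulVec, dotProduct_smul, smul_eq_mul]
  have hMre : ∀ x : Fin d × Fin d → ℂ,
      (star x ⬝ᵥ M *ᵥ x).re = N * (∑ p, normSq (x p)) - (star x ⬝ᵥ P *ᵥ x).re := by
    intro x
    rw [hMform, Complex.sub_re, dot_self_re, ← Complex.ofReal_mul]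
    simp
  have hMposdef : M.PosDef := by
    refine Matrix.PosDef.of_dotProduct_mulVec_pos hMH fun x hx => ?_
    rw [herm_form_real hMH x]
    rw [Complex.zero_lt_real]
    rw [hMre]
    have h := key_lt v x hminor hx
    rw [← hN, ← hP] at h
    linarith
  obtain ⟨μ, hμpos, hμ⟩ := posdef_uniform hMposdef
  -- constants
  set C : ℝ := (∑ p, ∑ q, ‖Δ p q‖) + 1 with hC
  have hCpos : 0 < C := by
    have : (0:ℝ) ≤ ∑ p, ∑ q, ‖Δ p q‖ :=
      Finset.sum_nonneg fun p _ => Finset.sum_nonneg fun q _ => norm_nonneg _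
    linarith
  have hΔbound : ∀ x : Fin d × Fin d → ℂ,
      |(star x ⬝ᵥ Δ *ᵥ x).re| ≤ C * (∑ p, normSq (x p)) := by
    intro x
    have h1 := entry_bound Δ x
    have h2 : (0:ℝ) ≤ ∑ p, normSq (x p) := Finset.sum_nonneg fun p _ => normSq_nonneg _
    have h3 : (∑ p, ∑ q, ‖Δ p q‖) * (∑ p, normSq (x p)) ≤ C * (∑ p, normSq (x p)) := by
      apply mul_le_mul_of_nonneg_right _ h2
      rw [hC]; linarith
    linarith
  set c : ℝ := N * ((d:ℝ)^2 - 1) with hc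
  have hd2 : (2:ℝ) ≤ (d:ℝ) := by exact_mod_cast hd
  have hcpos : 0 < c := by
    rw [hc]
    apply mul_pos hNpos
    nlinarith
  have hcne : c ≠ 0 := ne_of_gt hcpos
  set ρ : Matrix (Fin d × Fin d) (Fin d × Fin d) ℂ := ((c⁻¹:ℝ):ℂ) • M with hρ
  set lam : ℝ := (c⁻¹ * μ) / C with hlam
  have hcinvpos : 0 < c⁻¹ := inv_pos.mpr hcpos
  have hlampos : 0 < lam := by
    rw [hlam]
    positivity
  -- trace computations
  have hcard : (Fintype.card (Fin d × Fin d) : ℝ) = (d:ℝ)^2 := by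
    simp [Fintype.card_prod]
    ring
  have htraceM : M.trace = ((c:ℝ):ℂ) := by
    rw [hM, Matrix.trace_sub, Matrix.trace_smul, Matrix.trace_one, hP, ptrans_trace, trace_outer,
      ← hN]
    rw [smul_eq_mul]
    rw [show (Fintype.card (Fin d × Fin d) : ℂ) = (((d:ℝ)^2 : ℝ) : ℂ) from by
      push_cast; simp [Fintype.card_prod]; ring]
    rw [← Complex.ofReal_mul, ← Complex.ofReal_sub, hc]
    congr 1
    ring
  have htraceρ : ρ.trace = 1 := by
    rw [hρ, Matrix.trace_smul, htraceM, smul_eq_mul, ← Complex.ofReal_mul,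
      inv_mul_cancel₀ hcne, Complex.ofReal_one]
  -- Hermitian facts
  have hρH : ρ.IsHermitian := by
    rw [hρ, Matrix.IsHermitian, Matrix.conjTranspose_smul, hMH.eq]
    rw [show star ((c⁻¹:ℝ):ℂ) = ((c⁻¹:ℝ):ℂ) from by
      rw [Complex.star_def, Complex.conj_ofReal]]
  have hΔsH : ((lam:ℝ):ℂ) • Δ |>.IsHermitian := by
    rw [Matrix.IsHermitian, Matrix.conjTranspose_smul, hΔH.eq]
    rw [show star ((lam:ℝ):ℂ) = ((lam:ℝ):ℂ) from by
      rw [Complex.star_def, Complex.conj_ofReal]]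
  -- forms of ρ and the perturbed state
  have hρre : ∀ x : Fin d × Fin d → ℂ,
      (star x ⬝ᵥ ρ *ᵥ x).re = c⁻¹ * (star x ⬝ᵥ M *ᵥ x).re := by
    intro x
    rw [hρ, hsmul_form, Complex.re_ofReal_mul]
  have hρlb : ∀ x : Fin d × Fin d → ℂ,
      c⁻¹ * μ * (∑ p, normSq (x p)) ≤ (star x ⬝ᵥ ρ *ᵥ x).re := by
    intro x
    rw [hρre]
    have := hμ x
    have h2 : c⁻¹ * (μ * (∑ p, normSq (x p))) ≤ c⁻¹ * (star x ⬝ᵥ M *ᵥ x).re :=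
      mul_le_mul_of_nonneg_left this (le_of_lt hcinvpos)
    linarith [h2]
  -- the state ρ
  have hρPSD : ρ.PosSemidef := by
    refine Matrix.PosSemidef.of_dotProduct_mulVec_nonneg hρH fun x => ?_
    rw [herm_form_real hρH x]
    rw [Complex.zero_le_real]
    have h1 := hρlb x
    have h2 : (0:ℝ) ≤ ∑ p, normSq (x p) := Finset.sum_nonneg fun p _ => normSq_nonneg _
    nlinarith [mul_nonneg (mul_nonneg (le_of_lt hcinvpos) (le_of_lt hμpos)) h2]
  -- partial transpose of ρ
  have hptransM : ptrans M = ((N:ℝ):ℂ) • 1 - outer v := by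
    rw [hM, ptrans_sub, ptrans_smul, ptrans_one, hP, ptrans_ptrans]
  have hMtH : (((N:ℝ):ℂ) • (1 : Matrix (Fin d × Fin d) (Fin d × Fin d) ℂ)
      - outer v).IsHermitian := by
    rw [Matrix.IsHermitian, Matrix.conjTranspose_sub, hIdH.eq, (outer_isHermitian v).eq]
  have houter_le : ∀ x : Fin d × Fin d → ℂ,
      (star x ⬝ᵥ (outer v) *ᵥ x).re ≤ N * (∑ p, normSq (x p)) := by
    intro x
    rw [form_outer, Complex.ofReal_re]
    have h := lagrange (fun q => conj (v q)) x
    have hconj : (∑ q, normSq (conj (v q))) = N := by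
      rw [hN]
      exact Finset.sum_congr rfl fun q _ => normSq_conj _
    rw [hconj] at h
    have hnn : (0:ℝ) ≤ (1/2) * ∑ l, ∑ m,
        normSq (conj (v l) * conj (x m) - conj (v m) * conj (x l)) := by
      apply mul_nonneg (by norm_num)
      apply Finset.sum_nonneg; intro l _
      apply Finset.sum_nonneg; intro m _
      exact normSq_nonneg _
    linarith
  have hptransρPSD : (ptrans ρ).PosSemidef := by
    have hform : ∀ x : Fin d × Fin d → ℂ,
        (star x ⬝ᵥ (ptrans ρ) *ᵥ x).re
          = c⁻¹ * ((star x ⬝ᵥ (((N:ℝ):ℂ) • 1 - outer v) *ᵥ x).re) := by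
      intro x
      rw [hρ, ptrans_smul, hptransM, hsmul_form, Complex.re_ofReal_mul]
    have hH : (ptrans ρ).IsHermitian := by
      rw [hρ, ptrans_smul, hptransM, Matrix.IsHermitian, Matrix.conjTranspose_smul, hMtH.eq]
      rw [show star ((c⁻¹:ℝ):ℂ) = ((c⁻¹:ℝ):ℂ) from by
        rw [Complex.star_def, Complex.conj_ofReal]]
    refine Matrix.PosSemidef.of_dotProduct_mulVec_nonneg hH fun x => ?_
    rw [herm_form_real hH x, Complex.zero_le_real, hform]
    have h1 : (star x ⬝ᵥ (((N:ℝ):ℂ) • 1 - outer v) *ᵥ x).re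
        = N * (∑ p, normSq (x p)) - (star x ⬝ᵥ (outer v) *ᵥ x).re := by
      rw [Matrix.sub_mulVec, dotProduct_sub, Complex.sub_re]
      congr 1
      rw [Matrix.smul_mulVec, Matrix.one_mulVec, dotProduct_smul, smul_eq_mul,
        dot_self_re, ← Complex.ofReal_mul]
      simp
    rw [h1]
    have h2 := houter_le x
    nlinarith [hcinvpos]
  -- the perturbed state is PSD with trace one
  have hσH : (ρ + ((lam:ℝ):ℂ) • Δ).IsHermitian := by
    rw [Matrix.IsHermitian, Matrix.conjTranspose_add, hρH.eq, hΔsH.eq]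
  have hσPSD : (ρ + ((lam:ℝ):ℂ) • Δ).PosSemidef := by
    refine Matrix.PosSemidef.of_dotProduct_mulVec_nonneg hσH fun x => ?_
    rw [herm_form_real hσH x, Complex.zero_le_real]
    have hsplit : (star x ⬝ᵥ (ρ + ((lam:ℝ):ℂ) • Δ) *ᵥ x).re
        = (star x ⬝ᵥ ρ *ᵥ x).re + lam * (star x ⬝ᵥ Δ *ᵥ x).re := by
      rw [Matrix.add_mulVec, dotProduct_add, Complex.add_re, hsmul_form lam Δ x,
        Complex.re_ofReal_mul]
    rw [hsplit]
    have h1 := hρlb x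
    have h2 := hΔbound x
    have h3 : lam * (star x ⬝ᵥ Δ *ᵥ x).re ≥ -(lam * (C * (∑ p, normSq (x p)))) := by
      have habs : -(C * (∑ p, normSq (x p))) ≤ (star x ⬝ᵥ Δ *ᵥ x).re := by
        have := abs_le.mp h2
        linarith [this.1]
      nlinarith [hlampos]
    have h4 : lam * C = c⁻¹ * μ := by
      rw [hlam]
      field_simp
    have h5 : lam * (C * (∑ p, normSq (x p))) = c⁻¹ * μ * (∑ p, normSq (x p)) := by
      rw [← h4]; ring
    clear_value lam C c
    linarith [h1, h3, h5]
  have hσtr : (ρ + ((lam:ℝ):ℂ) • Δ).trace = 1 := by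
    rw [Matrix.trace_add, htraceρ, Matrix.trace_smul, hΔtr, smul_zero, add_zero]
  -- NPT of the perturbed state
  have hNPT : ¬ (ptrans (ρ + ((lam:ℝ):ℂ) • Δ)).PosSemidef := by
    intro hps
    have hz := hps.dotProduct_mulVec_nonneg v
    have hform : star v ⬝ᵥ (ptrans (ρ + ((lam:ℝ):ℂ) • Δ)) *ᵥ v
        = ((lam:ℝ):ℂ) * (star v ⬝ᵥ Δτ *ᵥ v) := by
      rw [ptrans_add, ptrans_smul]
      rw [Matrix.add_mulVec, dotProduct_add]
      rw [ptrans_smul, hptransM]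
      rw [hsmul_form, hsmul_form]
      have hzero : star v ⬝ᵥ (((N:ℝ):ℂ) • 1 - outer v) *ᵥ v = 0 := by
        rw [Matrix.sub_mulVec, dotProduct_sub]
        rw [Matrix.smul_mulVec, Matrix.one_mulVec, dotProduct_smul, smul_eq_mul,
          dot_self_re, ← hN, form_outer]
        have : (∑ q, conj (v q) * v q) = ((N:ℝ):ℂ) := by
          rw [sum_conj_mul_self, ← hN]
        rw [this]
        rw [show normSq (((N:ℝ):ℂ)) = N * N from Complex.normSq_ofReal N]
        rw [← Complex.ofReal_mul]
        exact sub_self _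
      rw [hzero, mul_zero, zero_add, hΔτdef]
    rw [hform] at hz
    have hre : (((lam:ℝ):ℂ) * (star v ⬝ᵥ Δτ *ᵥ v)).re = lam * (star v ⬝ᵥ Δτ *ᵥ v).re :=
      Complex.re_ofReal_mul _ _
    have hneg' : (((lam:ℝ):ℂ) * (star v ⬝ᵥ Δτ *ᵥ v)).re < 0 := by
      rw [hre]
      exact mul_neg_of_pos_of_neg hlampos hvneg
    have := (Complex.nonneg_iff.mp hz).1
    linarith
  exact ⟨ρ, lam, ⟨hρPSD, htraceρ⟩, hptransρPSD, ⟨hσPSD, hσtr⟩, hNPT⟩
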